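/- arXiv:1511.06999 — 2 statements merged into one kernel-verified Lean document; each statement's English description precedes it below -/
import Mathlib

section
/- Suppose assumptions (A1), (A2), (A3), and (A4) hold. Then there exists a constant C > 0, depending only on γ, α, the constants of (A1)–(A2), and on the C² norm of V, but independent of ε, such that for every 0 < ε ≤ 1 and every solution (u, m) of Problem 1, one has m(x)^α ≤ C for all x; in particular sup m ≤ C^{1/α}. -/
open Set intervalIntegral

noncomputable section

/-- `f : ℝ → ℝ` is ½-Hölder continuous: there is `K ≥ 0` with
`|f x - f y| ≤ K * |x - y| ^ (1/2)` for all `x y`. -/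
def IsHolderHalf (f : ℝ → ℝ) : Prop :=
  ∃ K : ℝ, 0 ≤ K ∧ ∀ x y : ℝ, |f x - f y| ≤ K * |x - y| ^ ((1 : ℝ) / 2)

/-- `f` is a 1-periodic function of class `C²` (a `C²` function on the torus `𝕋`). -/
def MemC2T (f : ℝ → ℝ) : Prop :=
  Function.Periodic f 1 ∧ ContDiff ℝ 2 f

/-- `f ∈ C^{2,1/2}(𝕋)`: 1-periodic, of class `C²`, with ½-Hölder continuous
second derivative. -/
def MemC2HalfT (f : ℝ → ℝ) : Prop :=
  MemC2T f ∧ IsHolderHalf (deriv (deriv f))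

/-- `(u, m)` is a solution of Problem 1 with Hamiltonian `H`, potential `V`,
exponent `α` and parameter `ε`: `u, m` are 1-periodic `C²` functions, `m > 0`
everywhere, and the system
`u - u'' + H(u') + V = m^α + ε (m - m'')`,
`m - m'' - (H'(u') m)' = 1 - ε (u - u'')`
holds pointwise. -/
def SolvesMFG (H V : ℝ → ℝ) (α ε : ℝ) (u m : ℝ → ℝ) : Prop :=
  MemC2T u ∧ MemC2T m ∧ (∀ x, 0 < m x) ∧
  (∀ x : ℝ, u x - deriv (deriv u) x + H (deriv u x) + V x
      = m x ^ α + ε * (m x - deriv (deriv m) x)) ∧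
  (∀ x : ℝ, m x - deriv (deriv m) x
      - deriv (fun y => deriv H (deriv u y) * m y) x
      = 1 - ε * (u x - deriv (deriv u) x))

/-- A bound `KV` on the `C²` norm of `V`. -/
def C2NormBound (KV : ℝ) (V : ℝ → ℝ) : Prop :=
  ∀ x : ℝ, |V x| ≤ KV ∧ |deriv V x| ≤ KV ∧ |deriv (deriv V) x| ≤ KV

lemma per_deriv {f : ℝ → ℝ} (hper : Function.Periodic f 1) :
    Function.Periodic (deriv f) 1 := by
  intro x
  rw [← deriv_comp_add_const f 1 x]
  congr 1
  funext y
  exact hper y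

lemma per_integral_deriv {f f' : ℝ → ℝ} (hper : Function.Periodic f 1)
    (hd : ∀ x, HasDerivAt f (f' x) x) (hc : Continuous f') :
    ∫ x in (0:ℝ)..1, f' x = 0 := by
  rw [intervalIntegral.integral_eq_sub_of_hasDerivAt (fun x _ => hd x)
    (hc.intervalIntegrable _ _)]
  simpa [sub_eq_zero] using (hper 0)

lemma key_pair_bound {f f' : ℝ → ℝ}
    (hd : ∀ x, HasDerivAt f (f' x) x) (hc : Continuous f')
    {a b : ℝ} (ha : a ∈ Icc (0:ℝ) 1) (hb : b ∈ Icc (0:ℝ) 1) :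
    |f a - f b| ≤ ∫ y in (0:ℝ)..1, |f' y| := by
  have hint : ∀ c d : ℝ, (∫ y in c..d, f' y) = f d - f c := fun c d =>
    intervalIntegral.integral_eq_sub_of_hasDerivAt (fun x _ => hd x)
      (hc.intervalIntegrable _ _)
  have habs : Continuous fun y => |f' y| := hc.abs
  have mono : ∀ c d : ℝ, c ∈ Icc (0:ℝ) 1 → d ∈ Icc (0:ℝ) 1 → c ≤ d →
      (∫ y in c..d, |f' y|) ≤ ∫ y in (0:ℝ)..1, |f' y| := by
    intro c d hc' hd' hcd
    refine intervalIntegral.integral_mono_interval hc'.1 hcd hd'.2 ?_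
      (habs.intervalIntegrable _ _)
    filter_upwards with y using abs_nonneg _
  rcases le_total b a with hba | hab
  · calc |f a - f b| = |∫ y in b..a, f' y| := by rw [hint]
      _ ≤ ∫ y in b..a, |f' y| := intervalIntegral.abs_integral_le_integral_abs hba
      _ ≤ _ := mono b a hb ha hba
  · calc |f a - f b| = |∫ y in a..b, f' y| := by rw [hint, abs_sub_comm]
      _ ≤ ∫ y in a..b, |f' y| := intervalIntegral.abs_integral_le_integral_abs hab
      _ ≤ _ := mono a b ha hb hab

lemma per_abs_sub_integral {f f' : ℝ → ℝ} (hper : Function.Periodic f 1)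
    (hd : ∀ x, HasDerivAt f (f' x) x) (hc : Continuous f') (x : ℝ) :
    |f x - ∫ y in (0:ℝ)..1, f y| ≤ ∫ y in (0:ℝ)..1, |f' y| := by
  have hcf : Continuous f :=
    (Differentiable.continuous (fun y => (hd y).differentiableAt))
  set x₀ := Int.fract x with hx₀
  have hfx : f x₀ = f x := by
    have h2 := hper.sub_int_mul_eq (x := x) ⌊x⌋
    rw [mul_one] at h2
    rw [hx₀, Int.fract]
    exact h2
  have hx₀mem : x₀ ∈ Icc (0:ℝ) 1 :=
    ⟨Int.fract_nonneg x, (Int.fract_lt_one x).le⟩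
  have h1 : f x - ∫ y in (0:ℝ)..1, f y = ∫ y in (0:ℝ)..1, (f x₀ - f y) := by
    rw [intervalIntegral.integral_sub (continuous_const.intervalIntegrable _ _)
      (hcf.intervalIntegrable _ _)]
    simp [hfx]
  rw [h1]
  have hcont2 : Continuous fun y => |f x₀ - f y| := (continuous_const.sub hcf).abs
  calc |∫ y in (0:ℝ)..1, (f x₀ - f y)| ≤ ∫ y in (0:ℝ)..1, |f x₀ - f y| :=
        intervalIntegral.abs_integral_le_integral_abs zero_le_one
    _ ≤ ∫ y in (0:ℝ)..1, ∫ z in (0:ℝ)..1, |f' z| := by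
        refine intervalIntegral.integral_mono_on zero_le_one
          (hcont2.intervalIntegrable _ _) (continuous_const.intervalIntegrable _ _) ?_
        intro y hy
        exact key_pair_bound hd hc hx₀mem hy
    _ = ∫ z in (0:ℝ)..1, |f' z| := by simp

lemma self_le_one_add_rpow {t γ : ℝ} (ht : 0 ≤ t) (hγ : 1 ≤ γ) : t ≤ 1 + t ^ γ := by
  rcases le_total t 1 with h | h
  · have : (0:ℝ) ≤ t ^ γ := Real.rpow_nonneg ht γ
    linarith
  · have h1 : t ^ (1:ℝ) ≤ t ^ γ := Real.rpow_le_rpow_of_exponent_le h hγ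
    rw [Real.rpow_one] at h1
    linarith

lemma rpow_le_one_add_succ {m α : ℝ} (hm : 0 < m) (hα : 0 < α) :
    m ^ α ≤ 1 + m ^ (α + 1) := by
  rcases le_total m 1 with h | h
  · have h1 : m ^ α ≤ 1 := Real.rpow_le_one hm.le h hα.le
    have : (0:ℝ) ≤ m ^ (α+1) := Real.rpow_nonneg hm.le _
    linarith
  · have h1 : m ^ α ≤ m ^ (α + 1) :=
      Real.rpow_le_rpow_of_exponent_le h (by linarith)
    linarith

lemma one_add_rpow_le {s γ : ℝ} (hs : 0 ≤ s) (hγ : 1 ≤ γ) :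
    (1 + s) ^ γ ≤ 2 ^ γ * (1 + s ^ γ) := by
  have hmax0 : (0:ℝ) ≤ max 1 s := le_trans zero_le_one (le_max_left _ _)
  have h1 : 1 + s ≤ 2 * max 1 s := by
    have := le_max_left (1:ℝ) s; have := le_max_right (1:ℝ) s; linarith
  have h2 : (1 + s) ^ γ ≤ (2 * max 1 s) ^ γ :=
    Real.rpow_le_rpow (by linarith) h1 (by linarith)
  rw [Real.mul_rpow (by norm_num) hmax0] at h2
  have h3 : (max 1 s) ^ γ ≤ 1 + s ^ γ := by
    rcases le_total s 1 with h | h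
    · rw [max_eq_left h, Real.one_rpow]
      have : (0:ℝ) ≤ s ^ γ := Real.rpow_nonneg hs γ
      linarith
    · rw [max_eq_right h]
      linarith
  have h4 : (0:ℝ) ≤ (2:ℝ) ^ γ := Real.rpow_nonneg (by norm_num) γ
  calc (1+s)^γ ≤ 2^γ * (max 1 s)^γ := h2
    _ ≤ 2^γ * (1 + s^γ) := mul_le_mul_of_nonneg_left h3 h4

lemma deriv_H_bound {H : ℝ → ℝ} {γ C1 C2 C3 : ℝ} (hγ : 1 ≤ γ)
    (hC1 : 0 ≤ C1) (hC2 : 0 ≤ C2) (hC3 : 0 ≤ C3)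
    (hH : ContDiff ℝ 2 H) (hconv : ConvexOn ℝ Set.univ H)
    (hA1 : ∀ p : ℝ, -C1 + C2 * |p| ^ γ ≤ H p ∧ H p ≤ C1 + C3 * |p| ^ γ) (p : ℝ) :
    |deriv H p| ≤ (2 * C1 + C3 * 2 ^ γ) * (1 + |p| ^ γ) := by
  have hdiff : ∀ q : ℝ, DifferentiableAt ℝ H q := fun q =>
    (hH.differentiable (by norm_num)).differentiableAt
  have hup : deriv H p ≤ H (p + 1) - H p := by
    have := hconv.deriv_le_slope (mem_univ p) (mem_univ (p+1)) (lt_add_one p) (hdiff p)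
    rwa [slope_def_field, add_sub_cancel_left, div_one] at this
  have hlo : H p - H (p - 1) ≤ deriv H p := by
    have := hconv.slope_le_deriv (mem_univ (p-1)) (mem_univ p) (by linarith) (hdiff p)
    rwa [slope_def_field, sub_sub_cancel, div_one] at this
  have habs1 : |p + 1| ^ γ ≤ (1 + |p|) ^ γ := by
    refine Real.rpow_le_rpow (abs_nonneg _) ?_ (by linarith)
    calc |p + 1| ≤ |p| + |(1:ℝ)| := abs_add_le _ _
      _ = 1 + |p| := by rw [abs_one]; ring
  have habs2 : |p - 1| ^ γ ≤ (1 + |p|) ^ γ := by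
    refine Real.rpow_le_rpow (abs_nonneg _) ?_ (by linarith)
    calc |p - 1| ≤ |p| + |(1:ℝ)| := abs_sub _ _
      _ = 1 + |p| := by rw [abs_one]; ring
  have hpow : (1 + |p|) ^ γ ≤ 2 ^ γ * (1 + |p| ^ γ) := one_add_rpow_le (abs_nonneg p) hγ
  have hpγ : (0:ℝ) ≤ |p| ^ γ := Real.rpow_nonneg (abs_nonneg p) γ
  have h2γ : (0:ℝ) ≤ (2:ℝ) ^ γ := Real.rpow_nonneg (by norm_num) γ
  have hup2 : H (p+1) ≤ C1 + C3 * |p+1| ^ γ := (hA1 (p+1)).2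
  have hlo2 : -C1 ≤ H p := by
    have := (hA1 p).1
    nlinarith [mul_nonneg hC2 hpγ]
  have hup3 : H (p-1) ≤ C1 + C3 * |p-1| ^ γ := (hA1 (p-1)).2
  have hHp : H p ≤ C1 + C3 * |p| ^ γ := (hA1 p).2
  rw [abs_le]
  constructor
  · have : H p - H (p-1) ≥ -C1 - (C1 + C3 * |p-1| ^ γ) := by nlinarith
    have h5 : C3 * |p-1| ^ γ ≤ C3 * (2 ^ γ * (1 + |p| ^ γ)) :=
      mul_le_mul_of_nonneg_left (le_trans habs2 hpow) hC3
    nlinarith [mul_nonneg hC1 hpγ, mul_nonneg (mul_nonneg hC3 h2γ) hpγ]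
  · have : deriv H p ≤ (C1 + C3 * |p+1| ^ γ) - (-C1) := by nlinarith
    have h5 : C3 * |p+1| ^ γ ≤ C3 * (2 ^ γ * (1 + |p| ^ γ)) :=
      mul_le_mul_of_nonneg_left (le_trans habs1 hpow) hC3
    nlinarith [mul_nonneg hC1 hpγ, mul_nonneg (mul_nonneg hC3 h2γ) hpγ]

lemma contdiff2_bits {f : ℝ → ℝ} (hf : ContDiff ℝ 2 f) :
    Differentiable ℝ f ∧ ContDiff ℝ 1 (deriv f) := by
  have h2 : ContDiff ℝ ((1:ℕ) + 1) f := by exact_mod_cast hf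
  rw [contDiff_succ_iff_deriv] at h2
  exact ⟨h2.1, h2.2.2⟩

set_option maxHeartbeats 4000000 in
/-- Under assumptions (A1)–(A4), there is a constant `C > 0`,
depending only on `γ, α`, the constants of (A1)–(A2) and on the `C²` norm of
`V` but independent of `ε`, such that for every `0 < ε ≤ 1` and every solution
`(u, m)` of Problem 1, `m(x)^α ≤ C` for all `x`; in particular
`sup m ≤ C^{1/α}`. -/
theorem sup_bound_on_m
    (α γ C1 C2 C3 tC1 tC2 tC3 KV : ℝ)
    (hα : 0 < α) (hγ : 1 < γ)
    (hC1 : 0 < C1) (hC2 : 0 < C2) (hC3 : 0 < C3)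
    (htC1 : 0 < tC1) (htC2 : 0 < tC2) (htC3 : 0 < tC3) :
    ∃ C > 0, ∀ H V : ℝ → ℝ, ContDiff ℝ 2 H → ConvexOn ℝ Set.univ H →
      Function.Periodic V 1 → ContDiff ℝ 2 V → C2NormBound KV V →
      (∀ p : ℝ, -C1 + C2 * |p| ^ γ ≤ H p ∧ H p ≤ C1 + C3 * |p| ^ γ) →
      (∀ p : ℝ, -tC1 + tC2 * |p| ^ γ ≤ p * deriv H p - H p ∧
          p * deriv H p - H p ≤ tC1 + tC3 * |p| ^ γ) →
      ∀ ε : ℝ, 0 < ε → ε ≤ 1 → ∀ u m : ℝ → ℝ, SolvesMFG H V α ε u m →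
        (∀ x : ℝ, m x ^ α ≤ C) ∧ (∀ x : ℝ, m x ≤ C ^ (1 / α)) := by
  set K' : ℝ := KV + tC1 + 1 with hK'def
  set R : ℝ := C1 + KV + 1 with hRdef
  set M₀ : ℝ := 2 + R + K' with hM₀def
  set B₁ : ℝ := K' * M₀ + R with hB₁def
  set O : ℝ := 1 + B₁ / C2 with hOdef
  set A : ℝ := 2 * C1 + C3 * 2 ^ γ with hAdef
  set D : ℝ := A * (M₀ + B₁ / tC2) with hDdef
  set Pa : ℝ := (M₀ + R + K') / 2 with hPadef
  set Cstar : ℝ := 3 + 2 * D + 2 * M₀ + Pa + O with hCstardef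
  have hbase : (0:ℝ) < max 1 Cstar := lt_of_lt_of_le zero_lt_one (le_max_left _ _)
  refine ⟨(max 1 Cstar) ^ α, Real.rpow_pos_of_pos hbase α, ?_⟩
  intro H V hH hconv hVper hV hVbound hA1 hA2 ε hε hε1 u m hsol
  clear_value K' R M₀ B₁ O A D Pa Cstar
  obtain ⟨⟨huper, hu⟩, ⟨hmper, hm⟩, hmpos, hHJB, hFP⟩ := hsol
  suffices hmain : ∀ x, m x ≤ max 1 Cstar by
    constructor
    · intro x
      exact Real.rpow_le_rpow (hmpos x).le (hmain x) hα.le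
    · intro x
      have hCinv : ((max 1 Cstar) ^ α) ^ ((1:ℝ)/α) = max 1 Cstar := by
        rw [← Real.rpow_mul hbase.le, mul_one_div, div_self hα.ne', Real.rpow_one]
      rw [hCinv]
      exact hmain x
  -- constants
  have hKV0 : 0 ≤ KV := le_trans (abs_nonneg _) (hVbound 0).1
  have hK'1 : 1 ≤ K' := by rw [hK'def]; linarith
  have hK'pos : 0 < K' := lt_of_lt_of_le zero_lt_one hK'1
  have hR1 : 1 ≤ R := by rw [hRdef]; linarith
  have hR0 : 0 ≤ R := le_trans zero_le_one hR1
  have h2γ0 : (0:ℝ) ≤ (2:ℝ) ^ γ := Real.rpow_nonneg (by norm_num) γ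
  have hA0 : 0 ≤ A := by rw [hAdef]; positivity
  -- derivatives
  set u1 : ℝ → ℝ := deriv u with hu1def
  set u2 : ℝ → ℝ := deriv u1 with hu2def
  set m1 : ℝ → ℝ := deriv m with hm1def
  set m2 : ℝ → ℝ := deriv m1 with hm2def
  set q : ℝ → ℝ := fun y => deriv H (u1 y) * m y with hqdef
  set q1 : ℝ → ℝ := deriv q with hq1def
  obtain ⟨hudiff, hu1cd⟩ := contdiff2_bits hu
  obtain ⟨hmdiff, hm1cd⟩ := contdiff2_bits hm
  obtain ⟨hHdiff, hH1cd⟩ := contdiff2_bits hH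
  have cu : Continuous u := hu.continuous
  have cm : Continuous m := hm.continuous
  have cV : Continuous V := hV.continuous
  have cu1 : Continuous u1 := hu1cd.continuous
  have cm1 : Continuous m1 := hm1cd.continuous
  have cH' : Continuous (deriv H) := hH1cd.continuous
  have hu1cd' : ContDiff ℝ 1 u1 := hu1cd
  have hm1cd' : ContDiff ℝ 1 m1 := hm1cd
  have hqcd : ContDiff ℝ 1 q := (hH1cd.comp hu1cd').mul (hm.of_le (by norm_num))
  have cq : Continuous q := hqcd.continuous
  have cq1 : Continuous q1 := hqcd.continuous_deriv le_rfl
  have hud : ∀ x, HasDerivAt u (u1 x) x := fun x => (hudiff x).hasDerivAt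
  have hmd : ∀ x, HasDerivAt m (m1 x) x := fun x => (hmdiff x).hasDerivAt
  have hu1d : ∀ x, HasDerivAt u1 (u2 x) x := fun x =>
    ((hu1cd.differentiable one_ne_zero) x).hasDerivAt
  have hm1d : ∀ x, HasDerivAt m1 (m2 x) x := fun x =>
    ((hm1cd.differentiable one_ne_zero) x).hasDerivAt
  have hqd : ∀ x, HasDerivAt q (q1 x) x := fun x =>
    ((hqcd.differentiable one_ne_zero) x).hasDerivAt
  have hqx : ∀ x, q x = deriv H (u1 x) * m x := fun x => by rw [hqdef]
  -- periodicity
  have hu1per : Function.Periodic u1 1 := by rw [hu1def]; exact per_deriv huper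
  have hm1per : Function.Periodic m1 1 := by rw [hm1def]; exact per_deriv hmper
  have hqper : Function.Periodic q 1 := by
    intro x; simp only [hqdef]; rw [hu1per x, hmper x]
  -- continuity of composite integrands
  have cHu1 : Continuous fun y => H (u1 y) := hHdiff.continuous.comp cu1
  have cH'u1 : Continuous fun y => deriv H (u1 y) := cH'.comp cu1
  have cmα : Continuous fun y => m y ^ α := cm.rpow_const (fun x => Or.inr hα.le)
  have cmα1 : Continuous fun y => m y ^ (α+1) :=
    cm.rpow_const (fun x => Or.inr (by linarith))
  have cgu1 : Continuous fun y => |u1 y| ^ γ :=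
    cu1.abs.rpow_const (fun x => Or.inr (by linarith))
  have hii : ∀ {f : ℝ → ℝ}, Continuous f →
      IntervalIntegrable f MeasureTheory.volume 0 1 := fun hf =>
    hf.intervalIntegrable 0 1
  -- integral of derivatives of u, m
  have hIu1 : ∫ y in (0:ℝ)..1, u1 y = 0 := per_integral_deriv huper hud cu1
  have hIm1 : ∫ y in (0:ℝ)..1, m1 y = 0 := per_integral_deriv hmper hmd cm1
  -- derivative facts for combined functions
  have hvd : ∀ x, HasDerivAt (fun y => m1 y + ε * u1 y + q y)
      (m x + ε * u x - 1) x := by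
    intro x
    have h := ((hm1d x).add ((hu1d x).const_mul ε)).add (hqd x)
    have heq : m2 x + ε * u2 x + q1 x = m x + ε * u x - 1 := by
      linear_combination -(hFP x)
    rw [← heq]; exact h
  have hvper : Function.Periodic (fun y => m1 y + ε * u1 y + q y) 1 := by
    intro x
    simp only
    rw [hm1per x, hu1per x, hqper x]
  have hwcont : Continuous fun y => m y + ε * u y := cm.add (continuous_const.mul cu)
  have hwcont1 : Continuous fun y => m y + ε * u y - 1 := hwcont.sub continuous_const
  -- Identity (A)
  have hA : (∫ y in (0:ℝ)..1, m y) + ε * (∫ y in (0:ℝ)..1, u y) = 1 := by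
    have h0 : ∫ y in (0:ℝ)..1, (m y + ε * u y - 1) = 0 :=
      per_integral_deriv hvper hvd hwcont1
    rw [intervalIntegral.integral_sub (hii hwcont) (hii continuous_const),
        intervalIntegral.integral_add (hii cm) (hii (continuous_const.fun_mul cu)),
        intervalIntegral.integral_const_mul] at h0
    simp only [intervalIntegral.integral_const, smul_eq_mul, mul_one, sub_zero] at h0
    linarith
  -- Identity (B)
  have hB : (∫ y in (0:ℝ)..1, u y) + (∫ y in (0:ℝ)..1, H (u1 y))
      + (∫ y in (0:ℝ)..1, V y) - (∫ y in (0:ℝ)..1, m y ^ α)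
      - ε * (∫ y in (0:ℝ)..1, m y) = 0 := by
    have hBd : ∀ x, HasDerivAt (fun y => u1 y - ε * m1 y)
        (u x + H (u1 x) + V x - m x ^ α - ε * m x) x := by
      intro x
      have h := (hu1d x).sub ((hm1d x).const_mul ε)
      have heq : u2 x - ε * m2 x = u x + H (u1 x) + V x - m x ^ α - ε * m x := by
        linear_combination -(hHJB x)
      rw [← heq]; exact h
    have hBper : Function.Periodic (fun y => u1 y - ε * m1 y) 1 := by
      intro x; simp only; rw [hu1per x, hm1per x]
    have hBc : Continuous fun y => u y + H (u1 y) + V y - m y ^ α - ε * m y :=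
      ((((cu.add cHu1).add cV).sub cmα).sub (continuous_const.mul cm))
    have h0 : ∫ y in (0:ℝ)..1, (u y + H (u1 y) + V y - m y ^ α - ε * m y) = 0 :=
      per_integral_deriv hBper hBd hBc
    rw [intervalIntegral.integral_sub (hii (((cu.fun_add cHu1).fun_add cV).fun_sub cmα))
          (hii (continuous_const.fun_mul cm)),
        intervalIntegral.integral_sub (hii ((cu.fun_add cHu1).fun_add cV)) (hii cmα),
        intervalIntegral.integral_add (hii (cu.fun_add cHu1)) (hii cV),
        intervalIntegral.integral_add (hii cu) (hii cHu1),
        intervalIntegral.integral_const_mul] at h0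
    linarith
  -- Identity (E)
  have hE : (∫ y in (0:ℝ)..1, m y ^ (α+1))
      + (∫ y in (0:ℝ)..1, (u1 y * deriv H (u1 y) - H (u1 y)) * m y)
      + ε * (∫ y in (0:ℝ)..1, (m y ^ 2 + m1 y ^ 2 + u1 y ^ 2))
      + ε * (∫ y in (0:ℝ)..1, u y ^ 2)
      - (∫ y in (0:ℝ)..1, V y * m y) - (∫ y in (0:ℝ)..1, u y) = 0 := by
    have hGd : ∀ x, HasDerivAt
        (fun y => m1 y * u y - u1 y * m y + ε * (m1 y * m y) + q y * u y
          + ε * (u1 y * u y))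
        (m x ^ (α+1) + (u1 x * deriv H (u1 x) - H (u1 x)) * m x
          + ε * (m x ^ 2 + m1 x ^ 2 + u1 x ^ 2) + ε * u x ^ 2
          - (V x * m x + u x)) x := by
      intro x
      have h := (((((hm1d x).mul (hud x)).sub ((hu1d x).mul (hmd x))).add
        (((hm1d x).mul (hmd x)).const_mul ε)).add ((hqd x).mul (hud x))).add
        (((hu1d x).mul (hud x)).const_mul ε)
      have hrp : m x ^ (α+1) = m x ^ α * m x := Real.rpow_add_one (hmpos x).ne' α
      have heq : m2 x * u x + m1 x * u1 x - (u2 x * m x + u1 x * m1 x)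
          + ε * (m2 x * m x + m1 x * m1 x) + (q1 x * u x + q x * u1 x)
          + ε * (u2 x * u x + u1 x * u1 x)
          = m x ^ (α+1) + (u1 x * deriv H (u1 x) - H (u1 x)) * m x
            + ε * (m x ^ 2 + m1 x ^ 2 + u1 x ^ 2) + ε * u x ^ 2
            - (V x * m x + u x) := by
        linear_combination (m x) * (hHJB x) - (u x) * (hFP x) - hrp + (u1 x) * (hqx x)
      rw [← heq]; exact h
    have hGper : Function.Periodic
        (fun y => m1 y * u y - u1 y * m y + ε * (m1 y * m y) + q y * u y
          + ε * (u1 y * u y)) 1 := by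
      intro x; simp only
      rw [hm1per x, hu1per x, hqper x, huper x, hmper x]
    have cT1 : Continuous fun y => m y ^ (α+1) := cmα1
    have cT2 : Continuous fun y => (u1 y * deriv H (u1 y) - H (u1 y)) * m y :=
      ((cu1.mul cH'u1).sub cHu1).mul cm
    have cT3 : Continuous fun y => ε * (m y ^ 2 + m1 y ^ 2 + u1 y ^ 2) :=
      continuous_const.mul (((cm.pow 2).add (cm1.pow 2)).add (cu1.pow 2))
    have cT4 : Continuous fun y => ε * u y ^ 2 := continuous_const.mul (cu.pow 2)
    have cT5 : Continuous fun y => V y * m y := cV.mul cm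
    have hGc : Continuous fun y =>
        m y ^ (α+1) + (u1 y * deriv H (u1 y) - H (u1 y)) * m y
          + ε * (m y ^ 2 + m1 y ^ 2 + u1 y ^ 2) + ε * u y ^ 2
          - (V y * m y + u y) :=
      ((((cT1.add cT2).add cT3).add cT4).sub (cT5.add cu))
    have h0 := per_integral_deriv hGper hGd hGc
    rw [intervalIntegral.integral_sub (hii (((cT1.fun_add cT2).fun_add cT3).fun_add cT4))
          (hii (cT5.fun_add cu)),
        intervalIntegral.integral_add (hii ((cT1.fun_add cT2).fun_add cT3)) (hii cT4),
        intervalIntegral.integral_add (hii (cT1.fun_add cT2)) (hii cT3),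
        intervalIntegral.integral_add (hii cT1) (hii cT2),
        intervalIntegral.integral_add (hii cT5) (hii cu),
        intervalIntegral.integral_const_mul, intervalIntegral.integral_const_mul] at h0
    linarith
  -- nonnegativity of various integrals
  have hIm0 : 0 ≤ ∫ y in (0:ℝ)..1, m y :=
    intervalIntegral.integral_nonneg zero_le_one (fun y _ => (hmpos y).le)
  have hIg0 : 0 ≤ ∫ y in (0:ℝ)..1, |u1 y| ^ γ :=
    intervalIntegral.integral_nonneg zero_le_one
      (fun y _ => Real.rpow_nonneg (abs_nonneg _) _)
  have hIgm0 : 0 ≤ ∫ y in (0:ℝ)..1, |u1 y| ^ γ * m y :=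
    intervalIntegral.integral_nonneg zero_le_one
      (fun y _ => mul_nonneg (Real.rpow_nonneg (abs_nonneg _) _) (hmpos y).le)
  have hJ0 : 0 ≤ ∫ y in (0:ℝ)..1, (m y ^ 2 + m1 y ^ 2 + u1 y ^ 2) :=
    intervalIntegral.integral_nonneg zero_le_one (fun y _ => by positivity)
  have hIu20 : 0 ≤ ∫ y in (0:ℝ)..1, u y ^ 2 :=
    intervalIntegral.integral_nonneg zero_le_one (fun y _ => by positivity)
  have hIabsup0 : 0 ≤ ∫ y in (0:ℝ)..1, |u1 y| :=
    intervalIntegral.integral_nonneg zero_le_one (fun y _ => abs_nonneg _)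
  have hIabsu0 : 0 ≤ ∫ y in (0:ℝ)..1, |u y| :=
    intervalIntegral.integral_nonneg zero_le_one (fun y _ => abs_nonneg _)
  -- (A2) lower bound integral
  have hIuHm_lb : -tC1 * (∫ y in (0:ℝ)..1, m y)
      + tC2 * (∫ y in (0:ℝ)..1, |u1 y| ^ γ * m y)
      ≤ ∫ y in (0:ℝ)..1, (u1 y * deriv H (u1 y) - H (u1 y)) * m y := by
    have h0 : (∫ y in (0:ℝ)..1, (-tC1 * m y + tC2 * (|u1 y| ^ γ * m y)))
        ≤ ∫ y in (0:ℝ)..1, (u1 y * deriv H (u1 y) - H (u1 y)) * m y := by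
      refine intervalIntegral.integral_mono_on zero_le_one
        (hii ((continuous_const.mul cm).add (continuous_const.mul (cgu1.mul cm))))
        (hii (((cu1.mul cH'u1).sub cHu1).mul cm)) ?_
      intro y _
      have h1 := mul_le_mul_of_nonneg_right (hA2 (u1 y)).1 (hmpos y).le
      have h2 : (-tC1 + tC2 * |u1 y| ^ γ) * m y
          = -tC1 * m y + tC2 * (|u1 y| ^ γ * m y) := by ring
      linarith only [h1, h2]
    rw [intervalIntegral.integral_add (hii (continuous_const.fun_mul cm))
          (hii (continuous_const.fun_mul (cgu1.fun_mul cm))),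
        intervalIntegral.integral_const_mul, intervalIntegral.integral_const_mul] at h0
    linarith
  -- (A1) lower bound integral
  have hIHH_lb : -C1 + C2 * (∫ y in (0:ℝ)..1, |u1 y| ^ γ)
      ≤ ∫ y in (0:ℝ)..1, H (u1 y) := by
    have h0 : (∫ y in (0:ℝ)..1, (-C1 + C2 * |u1 y| ^ γ))
        ≤ ∫ y in (0:ℝ)..1, H (u1 y) := by
      refine intervalIntegral.integral_mono_on zero_le_one
        (hii (continuous_const.add (continuous_const.mul cgu1))) (hii cHu1) ?_
      intro y _
      exact (hA1 (u1 y)).1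
    rw [intervalIntegral.integral_add (hii continuous_const)
          (hii (continuous_const.fun_mul cgu1)),
        intervalIntegral.integral_const_mul] at h0
    simp only [intervalIntegral.integral_const, smul_eq_mul, mul_one, sub_zero] at h0
    linarith
  -- V bounds
  have hIVm_ub : (∫ y in (0:ℝ)..1, V y * m y) ≤ KV * ∫ y in (0:ℝ)..1, m y := by
    have h0 : (∫ y in (0:ℝ)..1, V y * m y) ≤ ∫ y in (0:ℝ)..1, KV * m y := by
      refine intervalIntegral.integral_mono_on zero_le_one (hii (cV.mul cm))
        (hii (continuous_const.mul cm)) ?_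
      intro y _
      exact mul_le_mul_of_nonneg_right (le_trans (le_abs_self _) (hVbound y).1)
        (hmpos y).le
    rwa [intervalIntegral.integral_const_mul] at h0
  have hIV_bnd : |∫ y in (0:ℝ)..1, V y| ≤ KV := by
    calc |∫ y in (0:ℝ)..1, V y| ≤ ∫ y in (0:ℝ)..1, |V y| :=
          intervalIntegral.abs_integral_le_integral_abs zero_le_one
      _ ≤ ∫ y in (0:ℝ)..1, KV := by
          refine intervalIntegral.integral_mono_on zero_le_one (hii cV.abs)
            (hii continuous_const) ?_
          intro y _; exact (hVbound y).1
      _ = KV := by simp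
  -- m^α ≤ 1 + m^(α+1)
  have hIa_ub : (∫ y in (0:ℝ)..1, m y ^ α)
      ≤ 1 + ∫ y in (0:ℝ)..1, m y ^ (α+1) := by
    have h0 : (∫ y in (0:ℝ)..1, m y ^ α)
        ≤ ∫ y in (0:ℝ)..1, (1 + m y ^ (α+1)) := by
      refine intervalIntegral.integral_mono_on zero_le_one (hii cmα)
        (hii (continuous_const.add cmα1)) ?_
      intro y _
      exact rpow_le_one_add_succ (hmpos y) hα
    rw [intervalIntegral.integral_add (hii continuous_const) (hii cmα1)] at h0
    simp only [intervalIntegral.integral_const, smul_eq_mul, sub_zero, one_mul,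
      mul_one] at h0
    linarith only [h0]
  -- AM-GM for |u|
  have h2K'u : 2 * K' * (∫ y in (0:ℝ)..1, |u y|)
      ≤ (∫ y in (0:ℝ)..1, u y ^ 2) + K' ^ 2 := by
    have h0 : (∫ y in (0:ℝ)..1, 2 * K' * |u y|)
        ≤ ∫ y in (0:ℝ)..1, (u y ^ 2 + K' ^ 2) := by
      refine intervalIntegral.integral_mono_on zero_le_one
        (hii (continuous_const.mul cu.abs)) (hii ((cu.pow 2).add continuous_const)) ?_
      intro y _
      linarith only [sq_nonneg (|u y| - K'), sq_abs (u y)]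
    rw [intervalIntegral.integral_const_mul,
      intervalIntegral.integral_add (hii (cu.fun_pow 2)) (hii continuous_const)] at h0
    simp only [intervalIntegral.integral_const, smul_eq_mul, sub_zero, one_mul,
      mul_one] at h0
    linarith only [h0]
  -- |u'| ≤ 1 + |u'|^γ
  have hIabsup_ub : (∫ y in (0:ℝ)..1, |u1 y|)
      ≤ 1 + ∫ y in (0:ℝ)..1, |u1 y| ^ γ := by
    have h0 : (∫ y in (0:ℝ)..1, |u1 y|)
        ≤ ∫ y in (0:ℝ)..1, (1 + |u1 y| ^ γ) := by
      refine intervalIntegral.integral_mono_on zero_le_one (hii cu1.abs)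
        (hii (continuous_const.add cgu1)) ?_
      intro y _
      exact self_le_one_add_rpow (abs_nonneg _) hγ.le
    rw [intervalIntegral.integral_add (hii continuous_const) (hii cgu1)] at h0
    simp only [intervalIntegral.integral_const, smul_eq_mul, sub_zero, one_mul,
      mul_one] at h0
    linarith only [h0]
  -- |q| bound
  have hIabsQ_ub : (∫ y in (0:ℝ)..1, |q y|)
      ≤ A * (∫ y in (0:ℝ)..1, m y) + A * (∫ y in (0:ℝ)..1, |u1 y| ^ γ * m y) := by
    have h0 : (∫ y in (0:ℝ)..1, |q y|)
        ≤ ∫ y in (0:ℝ)..1, (A * m y + A * (|u1 y| ^ γ * m y)) := by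
      refine intervalIntegral.integral_mono_on zero_le_one (hii cq.abs)
        (hii ((continuous_const.mul cm).add
          (continuous_const.mul (cgu1.mul cm)))) ?_
      intro y _
      have h1 : |q y| = |deriv H (u1 y)| * m y := by
        rw [hqx y, abs_mul, abs_of_pos (hmpos y)]
      have h2 : |deriv H (u1 y)| ≤ A * (1 + |u1 y| ^ γ) := by
        rw [hAdef]
        exact deriv_H_bound hγ.le hC1.le hC2.le hC3.le hH hconv hA1 (u1 y)
      have h3 := mul_le_mul_of_nonneg_right h2 (hmpos y).le
      have h4 : A * (1 + |u1 y| ^ γ) * m y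
          = A * m y + A * (|u1 y| ^ γ * m y) := by ring
      rw [h1]
      linarith only [h3, h4]
    rw [intervalIntegral.integral_add (hii (continuous_const.fun_mul cm))
          (hii (continuous_const.fun_mul (cgu1.fun_mul cm))),
        intervalIntegral.integral_const_mul, intervalIntegral.integral_const_mul] at h0
    linarith
  have hIabsQ0 : 0 ≤ ∫ y in (0:ℝ)..1, |q y| :=
    intervalIntegral.integral_nonneg zero_le_one (fun y _ => abs_nonneg _)
  -- integral of v
  have hIv : (∫ y in (0:ℝ)..1, (m1 y + ε * u1 y + q y)) = ∫ y in (0:ℝ)..1, q y := by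
    rw [intervalIntegral.integral_add (hii (cm1.fun_add (continuous_const.fun_mul cu1)))
          (hii cq),
        intervalIntegral.integral_add (hii cm1) (hii (continuous_const.fun_mul cu1)),
        intervalIntegral.integral_const_mul, hIu1, hIm1]
    ring
  have hIQ_bnd : |∫ y in (0:ℝ)..1, q y| ≤ ∫ y in (0:ℝ)..1, |q y| :=
    intervalIntegral.abs_integral_le_integral_abs zero_le_one
  -- pointwise mean bounds
  have hu_pt : ∀ x, |u x - ∫ y in (0:ℝ)..1, u y| ≤ ∫ y in (0:ℝ)..1, |u1 y| :=
    per_abs_sub_integral huper hud cu1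
  have hIu_abs : |∫ y in (0:ℝ)..1, u y| ≤ ∫ y in (0:ℝ)..1, |u y| :=
    intervalIntegral.abs_integral_le_integral_abs zero_le_one
  -- w = m + εu
  have hwd : ∀ x, HasDerivAt (fun y => m y + ε * u y) (m1 x + ε * u1 x) x :=
    fun x => (hmd x).add ((hud x).const_mul ε)
  have hwper : Function.Periodic (fun y => m y + ε * u y) 1 := by
    intro x; simp only; rw [hmper x, huper x]
  have hw'c : Continuous fun y => m1 y + ε * u1 y := cm1.add (continuous_const.mul cu1)
  have hIw : (∫ y in (0:ℝ)..1, (m y + ε * u y)) = 1 := by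
    rw [intervalIntegral.integral_add (hii cm) (hii (continuous_const.fun_mul cu)),
      intervalIntegral.integral_const_mul]
    linarith
  have hw_pt : ∀ x, |(m x + ε * u x) - 1| ≤ ∫ y in (0:ℝ)..1, |m1 y + ε * u1 y| := by
    intro x
    have := per_abs_sub_integral hwper hwd hw'c x
    rwa [hIw] at this
  -- v = m1 + εu1 + q,  v' = w - 1
  have hv_pt : ∀ x, |(m1 x + ε * u1 x + q x) - ∫ y in (0:ℝ)..1, q y|
      ≤ ∫ y in (0:ℝ)..1, |m y + ε * u y - 1| := by
    intro x
    have := per_abs_sub_integral hvper hvd hwcont1 x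
    rwa [hIv] at this
  have hIabsw1_ub : (∫ y in (0:ℝ)..1, |m y + ε * u y - 1|)
      ≤ 1 + (∫ y in (0:ℝ)..1, m y) + ε * (∫ y in (0:ℝ)..1, |u y|) := by
    have h0 : (∫ y in (0:ℝ)..1, |m y + ε * u y - 1|)
        ≤ ∫ y in (0:ℝ)..1, (1 + m y + ε * |u y|) := by
      refine intervalIntegral.integral_mono_on zero_le_one (hii hwcont1.abs)
        (hii ((continuous_const.add cm).add (continuous_const.mul cu.abs))) ?_
      intro y _
      have h1 : ε * u y ≤ ε * |u y| := mul_le_mul_of_nonneg_left (le_abs_self _) hε.le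
      have h2 : -(ε * |u y|) ≤ ε * u y := by
        have h0 := mul_le_mul_of_nonneg_left (neg_abs_le (u y)) hε.le
        linarith only [h0]
      rw [abs_le]
      constructor
      · linarith only [(hmpos y).le, h1, h2]
      · linarith only [(hmpos y).le, h1, h2]
    rw [intervalIntegral.integral_add (hii (continuous_const.fun_add cm))
          (hii (continuous_const.fun_mul cu.abs)),
        intervalIntegral.integral_add (hii continuous_const) (hii cm),
        intervalIntegral.integral_const_mul] at h0
    simp only [intervalIntegral.integral_const, smul_eq_mul, sub_zero, one_mul,
      mul_one] at h0
    linarith only [h0]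
  have hIabsv_ub : (∫ y in (0:ℝ)..1, |m1 y + ε * u1 y + q y|)
      ≤ |∫ y in (0:ℝ)..1, q y| + ∫ y in (0:ℝ)..1, |m y + ε * u y - 1| := by
    have h0 : (∫ y in (0:ℝ)..1, |m1 y + ε * u1 y + q y|)
        ≤ ∫ y in (0:ℝ)..1, (|∫ z in (0:ℝ)..1, q z|
            + ∫ z in (0:ℝ)..1, |m z + ε * u z - 1|) := by
      refine intervalIntegral.integral_mono_on zero_le_one
        (hii ((cm1.add (continuous_const.mul cu1)).add cq).abs)
        (hii continuous_const) ?_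
      intro y _
      have h1 := hv_pt y
      have h2 : |m1 y + ε * u1 y + q y|
          ≤ |(m1 y + ε * u1 y + q y) - ∫ z in (0:ℝ)..1, q z|
            + |∫ z in (0:ℝ)..1, q z| := by
        calc |m1 y + ε * u1 y + q y|
            = |((m1 y + ε * u1 y + q y) - ∫ z in (0:ℝ)..1, q z)
              + ∫ z in (0:ℝ)..1, q z| := by ring_nf
          _ ≤ _ := abs_add_le _ _
      linarith
    calc (∫ y in (0:ℝ)..1, |m1 y + ε * u1 y + q y|)
        ≤ ∫ y in (0:ℝ)..1, (|∫ z in (0:ℝ)..1, q z|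
            + ∫ z in (0:ℝ)..1, |m z + ε * u z - 1|) := h0
      _ = _ := by simp
  have hIabsw'_ub : (∫ y in (0:ℝ)..1, |m1 y + ε * u1 y|)
      ≤ (∫ y in (0:ℝ)..1, |m1 y + ε * u1 y + q y|) + ∫ y in (0:ℝ)..1, |q y| := by
    have h0 : (∫ y in (0:ℝ)..1, |m1 y + ε * u1 y|)
        ≤ ∫ y in (0:ℝ)..1, (|m1 y + ε * u1 y + q y| + |q y|) := by
      refine intervalIntegral.integral_mono_on zero_le_one (hii hw'c.abs)
        (hii ((((cm1.add (continuous_const.mul cu1)).add cq).abs).add cq.abs)) ?_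
      intro y _
      calc |m1 y + ε * u1 y| = |(m1 y + ε * u1 y + q y) - q y| := by ring_nf
        _ ≤ |m1 y + ε * u1 y + q y| + |q y| := abs_sub _ _
    rwa [intervalIntegral.integral_add
      (hii (((cm1.fun_add (continuous_const.fun_mul cu1)).fun_add cq).abs)) (hii cq.abs)] at h0
  -- ===== numerical chain =====
  have hKIm_eq : K' * (∫ y in (0:ℝ)..1, m y)
      = KV * (∫ y in (0:ℝ)..1, m y) + tC1 * (∫ y in (0:ℝ)..1, m y)
        + (∫ y in (0:ℝ)..1, m y) := by rw [hK'def]; ring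
  have hεIm : ε * (∫ y in (0:ℝ)..1, m y) ≤ (∫ y in (0:ℝ)..1, m y) := by
    linarith only [mul_nonneg (sub_nonneg.mpr hε1) hIm0]
  have hεJ : 0 ≤ ε * (∫ y in (0:ℝ)..1, (m y ^ 2 + m1 y ^ 2 + u1 y ^ 2)) :=
    mul_nonneg hε.le hJ0
  have hIV_lb : -KV ≤ ∫ y in (0:ℝ)..1, V y := (abs_le.mp hIV_bnd).1
  have n1 : ε * (∫ y in (0:ℝ)..1, u y ^ 2) + C2 * (∫ y in (0:ℝ)..1, |u1 y| ^ γ)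
      + tC2 * (∫ y in (0:ℝ)..1, |u1 y| ^ γ * m y)
      ≤ K' * (∫ y in (0:ℝ)..1, m y) + R := by
    have hReq : R = C1 + KV + 1 := hRdef
    linarith only [hE, hB, hIVm_ub, hIuHm_lb, hIHH_lb, hIa_ub, hεIm, hεJ, hIV_lb,
      hKIm_eq, hReq]
  have hC2Ig : 0 ≤ C2 * (∫ y in (0:ℝ)..1, |u1 y| ^ γ) := mul_nonneg hC2.le hIg0
  have htC2Igm : 0 ≤ tC2 * (∫ y in (0:ℝ)..1, |u1 y| ^ γ * m y) :=
    mul_nonneg htC2.le hIgm0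
  have hεIu20 : 0 ≤ ε * (∫ y in (0:ℝ)..1, u y ^ 2) := mul_nonneg hε.le hIu20
  have hεIu2_ub : ε * (∫ y in (0:ℝ)..1, u y ^ 2)
      ≤ K' * (∫ y in (0:ℝ)..1, m y) + R := by
    linarith only [n1, hC2Ig, htC2Igm]
  -- step 2 : Im ≤ M₀
  have a1 : (∫ y in (0:ℝ)..1, m y) ≤ 1 + ε * (∫ y in (0:ℝ)..1, |u y|) := by
    have h1 : -(∫ y in (0:ℝ)..1, |u y|) ≤ ∫ y in (0:ℝ)..1, u y :=
      (abs_le.mp hIu_abs).1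
    have h2 := mul_le_mul_of_nonneg_left h1 hε.le
    linarith only [hA, h2]
  have b1 : (2*K') * (∫ y in (0:ℝ)..1, m y)
      ≤ (2*K') * (1 + ε * ∫ y in (0:ℝ)..1, |u y|) :=
    mul_le_mul_of_nonneg_left a1 (by linarith only [hK'pos])
  have e1 : ε * (2 * K' * (∫ y in (0:ℝ)..1, |u y|))
      ≤ ε * ((∫ y in (0:ℝ)..1, u y ^ 2) + K' ^ 2) :=
    mul_le_mul_of_nonneg_left h2K'u hε.le
  have e2 : ε * K' ^ 2 ≤ K' ^ 2 := by
    linarith only [mul_nonneg (sub_nonneg.mpr hε1) (sq_nonneg K')]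
  have n2' : K' * (∫ y in (0:ℝ)..1, m y) ≤ 2 * K' + R + K' ^ 2 := by
    linarith only [b1, e1, e2, hεIu2_ub]
  have hKM0_eq : K' * M₀ = 2*K' + K'*R + K'^2 := by rw [hM₀def]; ring
  have hK'R : R ≤ K' * R := by
    linarith only [mul_nonneg (sub_nonneg.mpr hK'1) hR0]
  have n2'' : K' * (∫ y in (0:ℝ)..1, m y) ≤ K' * M₀ := by
    linarith only [n2', hKM0_eq, hK'R]
  have n2 : (∫ y in (0:ℝ)..1, m y) ≤ M₀ := le_of_mul_le_mul_left n2'' hK'pos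
  -- step 3 : Ig, Igm bounds
  have n3 : (∫ y in (0:ℝ)..1, |u1 y| ^ γ) ≤ B₁ / C2 := by
    rw [le_div_iff₀ hC2]
    linarith only [n1, hεIu20, htC2Igm, n2'', hB₁def]
  have n4 : (∫ y in (0:ℝ)..1, |u1 y| ^ γ * m y) ≤ B₁ / tC2 := by
    rw [le_div_iff₀ htC2]
    linarith only [n1, hεIu20, hC2Ig, n2'', hB₁def]
  have n5 : (∫ y in (0:ℝ)..1, |q y|) ≤ D := by
    have hAIm := mul_le_mul_of_nonneg_left n2 hA0
    have hAIgm := mul_le_mul_of_nonneg_left n4 hA0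
    have hDeq : D = A * M₀ + A * (B₁ / tC2) := by rw [hDdef]; ring
    linarith only [hIabsQ_ub, hAIm, hAIgm, hDeq]
  have n6 : ε * (∫ y in (0:ℝ)..1, |u y|) ≤ Pa := by
    have hPa_eq : (2*K') * Pa = K' * M₀ + K' * R + K' ^ 2 := by
      rw [hPadef, hM₀def]; ring
    have h7 : (2*K') * (ε * ∫ y in (0:ℝ)..1, |u y|) ≤ (2*K') * Pa := by
      linarith only [e1, e2, hεIu2_ub, n2'', hK'R, hPa_eq]
    exact le_of_mul_le_mul_left h7 (by linarith only [hK'pos])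
  have n7 : (∫ y in (0:ℝ)..1, |m y + ε * u y - 1|) ≤ 1 + M₀ + Pa := by
    linarith only [hIabsw1_ub, n2, n6]
  have n8 : (∫ y in (0:ℝ)..1, |m1 y + ε * u1 y + q y|) ≤ D + (1 + M₀ + Pa) := by
    linarith only [hIabsv_ub, hIQ_bnd, n5, n7]
  have n9 : (∫ y in (0:ℝ)..1, |m1 y + ε * u1 y|) ≤ 2*D + 1 + M₀ + Pa := by
    linarith only [hIabsw'_ub, n8, n5]
  -- final pointwise bound
  intro x
  have f1 : m x + ε * u x ≤ 1 + (2*D + 1 + M₀ + Pa) := by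
    linarith only [le_abs_self ((m x + ε * u x) - 1), hw_pt x, n9]
  have f3 : |u x| ≤ |∫ y in (0:ℝ)..1, u y| + ∫ y in (0:ℝ)..1, |u1 y| := by
    have h := hu_pt x
    calc |u x| = |(u x - ∫ y in (0:ℝ)..1, u y) + ∫ y in (0:ℝ)..1, u y| := by
          congr 1; ring
      _ ≤ |u x - ∫ y in (0:ℝ)..1, u y| + |∫ y in (0:ℝ)..1, u y| := abs_add_le _ _
      _ ≤ _ := by linarith only [h]
  have h5 : ε * (∫ y in (0:ℝ)..1, u y) = 1 - ∫ y in (0:ℝ)..1, m y := by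
    linarith only [hA]
  have h4 : ε * |∫ y in (0:ℝ)..1, u y| ≤ 1 + M₀ := by
    rw [← abs_of_pos hε, ← abs_mul, h5, abs_le]
    constructor <;> linarith only [hIm0, n2]
  have h9 : ε * (∫ y in (0:ℝ)..1, |u1 y|) ≤ 1 + B₁ / C2 := by
    have h10 : ε * (∫ y in (0:ℝ)..1, |u1 y|) ≤ ∫ y in (0:ℝ)..1, |u1 y| := by
      linarith only [mul_nonneg (sub_nonneg.mpr hε1) hIabsup0]
    linarith only [hIabsup_ub, n3, h10]
  have h11 := mul_le_mul_of_nonneg_left f3 hε.le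
  have f2 : ε * |u x| ≤ (1 + M₀) + (1 + B₁ / C2) := by
    linarith only [h11, h4, h9]
  have f4 : m x ≤ (m x + ε * u x) + ε * |u x| := by
    have h12 := mul_nonneg hε.le
      (show (0:ℝ) ≤ u x + |u x| by linarith only [neg_abs_le (u x)])
    linarith only [h12]
  have f5 : m x ≤ Cstar := by
    have hOeq : O = 1 + B₁ / C2 := hOdef
    have hCeq : Cstar = 3 + 2 * D + 2 * M₀ + Pa + O := hCstardef
    linarith only [f1, f2, f4, hOeq, hCeq]
  exact le_trans f5 (le_max_right _ _)
end
end

section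
/- For every 0 < ε ≤ 1 and every solution (u, m) of Problem 1, the following integral identity holds: ∫₀¹ [(1+ε)·H(u') + m·(u'·H'(u') − H(u'))] dx + ∫₀¹ m^{α+1} dx + ε ∫₀¹ (u² + m² + (u')² + (m')²) dx = −ε ∫₀¹ u dx + ∫₀¹ (m − 1 − ε)·V dx + (1+ε) ∫₀¹ m^α dx + ε(1+ε) ∫₀¹ m dx. -/
open Set intervalIntegral

noncomputable section

private lemma periodic_deriv' (f : ℝ → ℝ) (h : Function.Periodic f 1) :
    Function.Periodic (deriv f) 1 := by
  intro x
  rw [show deriv f (x+1) = deriv (fun y => f (y+1)) x from (deriv_comp_add_const f 1 x).symm]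
  congr 1; funext y; exact h y

private lemma c2_facts (f : ℝ → ℝ) (h : ContDiff ℝ 2 f) :
    Differentiable ℝ f ∧ Differentiable ℝ (deriv f) ∧ Continuous (deriv (deriv f)) := by
  have h' := contDiff_succ_iff_deriv (n := 1) (f := f)
  simp at h'
  obtain ⟨h1, h2⟩ := h'.mp h
  exact ⟨h1, h2.differentiable one_ne_zero, h2.continuous_deriv le_rfl⟩


/-- For every `0 < ε ≤ 1` and every solution `(u, m)` of
Problem 1, the integral identity
`∫₀¹ [(1+ε) H(u') + m (u' H'(u') - H(u'))] + ∫₀¹ m^{α+1}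
  + ε ∫₀¹ (u² + m² + u'² + m'²)
  = -ε ∫₀¹ u + ∫₀¹ (m - 1 - ε) V + (1+ε) ∫₀¹ m^α + ε(1+ε) ∫₀¹ m` holds. -/
theorem energy_identity
    (α : ℝ) (hα : 0 < α)
    (H V : ℝ → ℝ) (hH : ContDiff ℝ 2 H)
    (hVcont : Continuous V) (hVper : Function.Periodic V 1) :
    ∀ ε : ℝ, 0 < ε → ε ≤ 1 → ∀ u m : ℝ → ℝ, SolvesMFG H V α ε u m →
      (∫ x in (0:ℝ)..1, ((1 + ε) * H (deriv u x)
          + m x * (deriv u x * deriv H (deriv u x) - H (deriv u x))))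
        + (∫ x in (0:ℝ)..1, m x ^ (α + 1))
        + ε * (∫ x in (0:ℝ)..1,
            ((u x) ^ 2 + (m x) ^ 2 + (deriv u x) ^ 2 + (deriv m x) ^ 2))
      = -(ε * ∫ x in (0:ℝ)..1, u x)
        + (∫ x in (0:ℝ)..1, (m x - 1 - ε) * V x)
        + (1 + ε) * (∫ x in (0:ℝ)..1, m x ^ α)
        + ε * (1 + ε) * (∫ x in (0:ℝ)..1, m x) := by
  intro ε hε hε1 u m hsol
  obtain ⟨⟨huper, hu⟩, ⟨hmper, hm⟩, hmpos, heq1, heq2⟩ := hsol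
  obtain ⟨hud, hu'd, hu''c⟩ := c2_facts u hu
  obtain ⟨hmd, hm'd, hm''c⟩ := c2_facts m hm
  obtain ⟨hHd, hH'd, _⟩ := c2_facts H hH
  have huc : Continuous u := hud.continuous
  have hu'c : Continuous (deriv u) := hu'd.continuous
  have hmc : Continuous m := hmd.continuous
  have hm'c : Continuous (deriv m) := hm'd.continuous
  -- W
  set W : ℝ → ℝ := fun y => deriv H (deriv u y) * m y with hW
  have hWd : Differentiable ℝ W := ((hH'd.comp hu'd)).mul hmd
  -- E
  set E : ℝ → ℝ := fun x => (1+ε) * deriv u x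
      - (m x * deriv u x - u x * deriv m x) + u x * W x
      - ε*(1+ε) * deriv m x + ε * (m x * deriv m x) + ε * (u x * deriv u x) with hE
  have hEda : ∀ x, HasDerivAt E
      ((1+ε) * deriv (deriv u) x
        - ((deriv m x * deriv u x + m x * deriv (deriv u) x)
            - (deriv u x * deriv m x + u x * deriv (deriv m) x))
        + (deriv u x * W x + u x * deriv W x)
        - ε*(1+ε) * deriv (deriv m) x
        + ε * (deriv m x * deriv m x + m x * deriv (deriv m) x)
        + ε * (deriv u x * deriv u x + u x * deriv (deriv u) x)) x := by
    intro x
    have h0 : HasDerivAt u (deriv u x) x := (hud x).hasDerivAt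
    have h1 : HasDerivAt (deriv u) (deriv (deriv u) x) x := (hu'd x).hasDerivAt
    have h2 : HasDerivAt m (deriv m x) x := (hmd x).hasDerivAt
    have h3 : HasDerivAt (deriv m) (deriv (deriv m) x) x := (hm'd x).hasDerivAt
    have h4 : HasDerivAt W (deriv W x) x := (hWd x).hasDerivAt
    exact (((((h1.const_mul (1+ε)).sub ((h2.mul h1).sub (h0.mul h3))).add
      (h0.mul h4)).sub (h3.const_mul (ε*(1+ε)))).add ((h2.mul h3).const_mul ε)).add
      ((h0.mul h1).const_mul ε)
  have hEdiff : Differentiable ℝ E := fun x => (hEda x).differentiableAt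
  -- pointwise identity: the big integrand difference equals deriv E
  set G : ℝ → ℝ := fun x =>
      ((1 + ε) * H (deriv u x)
        + m x * (deriv u x * deriv H (deriv u x) - H (deriv u x)))
      + m x ^ (α + 1)
      + ε * ((u x) ^ 2 + (m x) ^ 2 + (deriv u x) ^ 2 + (deriv m x) ^ 2)
      - (-(ε * u x) + (m x - 1 - ε) * V x + (1 + ε) * (m x ^ α)
          + ε * (1 + ε) * m x) with hG
  have hptw : ∀ x, G x = deriv E x := by
    intro x
    rw [(hEda x).deriv, hG]
    simp only
    rw [Real.rpow_add_one (ne_of_gt (hmpos x))]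
    have e1 := heq1 x
    have e2 := heq2 x
    simp only [hW] at e2 ⊢
    linear_combination (1 + ε - m x) * e1 + u x * e2
  -- integral of deriv E over a period is 0
  have hEper : Function.Periodic E 1 := by
    intro x
    simp only [hE, hW, huper x, hmper x, periodic_deriv' u huper x, periodic_deriv' m hmper x]
  have hderivEcont : Continuous (deriv E) := by
    have : deriv E = G := funext fun x => (hptw x).symm
    rw [this, hG]
    have hmα : Continuous (fun x => m x ^ α) :=
      hmc.rpow_const (fun x => Or.inl (ne_of_gt (hmpos x)))
    have hmα1 : Continuous (fun x => m x ^ (α+1)) :=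
      hmc.rpow_const (fun x => Or.inl (ne_of_gt (hmpos x)))
    have hHc : Continuous (fun x => H (deriv u x)) := hHd.continuous.comp hu'c
    have hH'c : Continuous (fun x => deriv H (deriv u x)) := hH'd.continuous.comp hu'c
    fun_prop
  have hkey : (∫ x in (0:ℝ)..1, G x) = 0 := by
    have h1 : (∫ x in (0:ℝ)..1, deriv E x) = E 1 - E 0 :=
      integral_deriv_eq_sub (fun x _ => hEdiff x)
        (hderivEcont.intervalIntegrable 0 1)
    have h2 : (∫ x in (0:ℝ)..1, G x) = ∫ x in (0:ℝ)..1, deriv E x :=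
      intervalIntegral.integral_congr (fun x _ => hptw x)
    rw [h2, h1, show (1:ℝ) = 0 + 1 by ring, hEper 0, sub_self]
  -- integrability of the pieces
  have hHc : Continuous (fun x => H (deriv u x)) := hHd.continuous.comp hu'c
  have hH'c : Continuous (fun x => deriv H (deriv u x)) := hH'd.continuous.comp hu'c
  have hmα : Continuous (fun x => m x ^ α) :=
    hmc.rpow_const (fun x => Or.inl (ne_of_gt (hmpos x)))
  have hmα1 : Continuous (fun x => m x ^ (α+1)) :=
    hmc.rpow_const (fun x => Or.inl (ne_of_gt (hmpos x)))
  have iA : IntervalIntegrable (fun x => (1 + ε) * H (deriv u x)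
      + m x * (deriv u x * deriv H (deriv u x) - H (deriv u x))) MeasureTheory.volume 0 1 := by
    apply Continuous.intervalIntegrable; fun_prop
  have iB : IntervalIntegrable (fun x => m x ^ (α+1)) MeasureTheory.volume 0 1 :=
    hmα1.intervalIntegrable 0 1
  have iS : IntervalIntegrable (fun x =>
      (u x) ^ 2 + (m x) ^ 2 + (deriv u x) ^ 2 + (deriv m x) ^ 2) MeasureTheory.volume 0 1 := by
    apply Continuous.intervalIntegrable; fun_prop
  have iU : IntervalIntegrable u MeasureTheory.volume 0 1 := huc.intervalIntegrable 0 1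
  have iNU : IntervalIntegrable (fun x => -(ε * u x)) MeasureTheory.volume 0 1 := by
    apply Continuous.intervalIntegrable; fun_prop
  have iV : IntervalIntegrable (fun x => (m x - 1 - ε) * V x) MeasureTheory.volume 0 1 := by
    apply Continuous.intervalIntegrable; fun_prop
  have iMα : IntervalIntegrable (fun x => m x ^ α) MeasureTheory.volume 0 1 :=
    hmα.intervalIntegrable 0 1
  have iM : IntervalIntegrable m MeasureTheory.volume 0 1 := hmc.intervalIntegrable 0 1
  -- split ∫ G
  have hsplit : (∫ x in (0:ℝ)..1, G x)
      = ((∫ x in (0:ℝ)..1, ((1 + ε) * H (deriv u x)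
          + m x * (deriv u x * deriv H (deriv u x) - H (deriv u x))))
        + (∫ x in (0:ℝ)..1, m x ^ (α + 1))
        + ε * (∫ x in (0:ℝ)..1,
            ((u x) ^ 2 + (m x) ^ 2 + (deriv u x) ^ 2 + (deriv m x) ^ 2)))
      - (-(ε * ∫ x in (0:ℝ)..1, u x)
        + (∫ x in (0:ℝ)..1, (m x - 1 - ε) * V x)
        + (1 + ε) * (∫ x in (0:ℝ)..1, m x ^ α)
        + ε * (1 + ε) * (∫ x in (0:ℝ)..1, m x)) := by
    rw [hG]
    rw [← intervalIntegral.integral_const_mul ε, ← intervalIntegral.integral_const_mul ε,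
        ← intervalIntegral.integral_const_mul (1+ε), ← intervalIntegral.integral_const_mul (ε*(1+ε))]
    rw [← intervalIntegral.integral_neg]
    rw [← intervalIntegral.integral_add iA iB]
    rw [← intervalIntegral.integral_add (iA.add iB) (iS.const_mul ε)]
    rw [← intervalIntegral.integral_add iNU iV]
    rw [← intervalIntegral.integral_add (iNU.add iV) (iMα.const_mul (1+ε))]
    rw [← intervalIntegral.integral_add ((iNU.add iV).add (iMα.const_mul (1+ε)))
        (iM.const_mul (ε*(1+ε)))]
    rw [← intervalIntegral.integral_sub
      ((iA.add iB).add (iS.const_mul ε))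
      (((iNU.add iV).add (iMα.const_mul (1+ε))).add (iM.const_mul (ε*(1+ε))))]
  linarith [hsplit ▸ hkey]
end
end
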